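/- Let p be a prime and let f₂ : ℕ → ℂ be eventually periodic and multiplicative. Then the sequence a₂ : ℕ → ℂ given by a₂(n) = f₂(n / p^{ν_p(n)}) for n ≥ 1 is multiplicative and p-automatic. -/

import Mathlib

/-- A sequence `f : ℕ → ℂ` is `lam`-automatic if its `lam`-kernel is finite. -/
def IsAutomatic (lam : ℕ) (f : ℕ → ℂ) : Prop :=
  {g : ℕ → ℂ | ∃ k r : ℕ, r < lam ^ k ∧ g = fun n => f (lam ^ k * n + r)}.Finite

/-- A sequence is multiplicative if `f 1 = 1` and `f (m*n) = f m * f n` for coprime `m n ≥ 1`. -/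
def IsMultiplicativeSeq (f : ℕ → ℂ) : Prop :=
  f 1 = 1 ∧ ∀ m n : ℕ, 1 ≤ m → 1 ≤ n → Nat.Coprime m n → f (m * n) = f m * f n

/-- Eventually periodic sequence. -/
def EventuallyPeriodicSeq (f : ℕ → ℂ) : Prop :=
  ∃ d : ℕ, 1 ≤ d ∧ ∃ n₀ : ℕ, ∀ n ≥ n₀, f (n + d) = f n

/-- A Dirichlet character of modulus `k`: `k`-periodic, completely multiplicative,
and vanishing exactly at arguments not coprime to `k`. -/
def IsDirichletCharacterSeq (k : ℕ) (χ : ℕ → ℂ) : Prop :=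
  (∀ n : ℕ, χ (n + k) = χ n) ∧ (∀ m n : ℕ, χ (m * n) = χ m * χ n) ∧
    (∀ n : ℕ, χ n = 0 ↔ 1 < Nat.gcd n k)

theorem stmt_4 (p : ℕ) (hp : p.Prime)
    (f₂ : ℕ → ℂ) (hf₂ : EventuallyPeriodicSeq f₂) (hf₂m : IsMultiplicativeSeq f₂)
    (a₂ : ℕ → ℂ)
    (hdef : ∀ n : ℕ, 1 ≤ n → a₂ n = f₂ (n / p ^ padicValNat p n)) :
    IsMultiplicativeSeq a₂ ∧ IsAutomatic p a₂ := by
  haveI : Fact p.Prime := ⟨hp⟩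
  -- decomposition lemma
  have decomp : ∀ n : ℕ, 0 < n →
      ∃ t, 0 < t ∧ ¬ p ∣ t ∧ n = p ^ padicValNat p n * t := by
    intro n hn
    refine ⟨n / p ^ padicValNat p n, ?_, ?_, ?_⟩
    · exact Nat.div_pos (Nat.le_of_dvd hn pow_padicValNat_dvd) (pow_pos hp.pos _)
    · have := Nat.not_dvd_ordCompl hp hn.ne'
      rwa [Nat.factorization_def n hp] at this
    · exact (Nat.mul_div_cancel' pow_padicValNat_dvd).symm
  -- value lemma
  have valA : ∀ j t : ℕ, 0 < t → ¬ p ∣ t → a₂ (p ^ j * t) = f₂ t := by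
    intro j t ht hnd
    have hpos : 1 ≤ p ^ j * t := Nat.mul_pos (pow_pos hp.pos j) ht
    have hval : padicValNat p (p ^ j * t) = j := by
      rw [padicValNat.mul (pow_ne_zero j hp.pos.ne') ht.ne', padicValNat.prime_pow,
        padicValNat.eq_zero_of_not_dvd hnd, add_zero]
    rw [hdef _ hpos, hval, Nat.mul_div_cancel_left t (pow_pos hp.pos j)]
  obtain ⟨hf1, hfm⟩ := hf₂m
  constructor
  · -- multiplicativity
    constructor
    · have := valA 0 1 one_pos (by simpa using hp.one_lt.ne')
      simpa [hf1] using this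
    · intro m n hm hn hmn
      obtain ⟨tm, htm, hndm, hdm⟩ := decomp m hm
      obtain ⟨tn, htn, hndn, hdn⟩ := decomp n hn
      have hco : Nat.Coprime tm tn :=
        Nat.Coprime.coprime_dvd_left ⟨_, hdm.trans (mul_comm _ _)⟩
          (Nat.Coprime.coprime_dvd_right ⟨_, hdn.trans (mul_comm _ _)⟩ hmn)
      have hmul : m * n = p ^ (padicValNat p m + padicValNat p n) * (tm * tn) := by
        conv_lhs => rw [hdm, hdn]
        rw [pow_add]; ring
      have hndmn : ¬ p ∣ tm * tn := by
        intro h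
        rcases (hp.dvd_mul.mp h) with h | h
        · exact hndm h
        · exact hndn h
      rw [hmul, valA _ _ (Nat.mul_pos htm htn) hndmn, hdm, hdn,
        valA _ _ htm hndm, valA _ _ htn hndn, hfm tm tn htm htn hco]
  · -- automaticity
    obtain ⟨d, hd, n₀, hper⟩ := hf₂
    -- periodicity in congruence form
    have aux : ∀ t x : ℕ, n₀ ≤ x → f₂ (x + t * d) = f₂ x := by
      intro t
      induction t with
      | zero => simp
      | succ t ih =>
        intro x hx
        rw [show x + (t + 1) * d = (x + t * d) + d by ring,
          hper _ (by omega), ih x hx]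
    have per2 : ∀ x y : ℕ, n₀ ≤ x → n₀ ≤ y → x % d = y % d → f₂ x = f₂ y := by
      have half : ∀ x y : ℕ, n₀ ≤ x → x ≤ y → x % d = y % d → f₂ x = f₂ y := by
        intro x y hx hxy hmod
        obtain ⟨t, ht⟩ := (Nat.modEq_iff_dvd' hxy).mp hmod
        have hy : y = x + d * t := by omega
        rw [hy, show x + d * t = x + t * d by ring, aux t x hx]
      intro x y hx hy hmod
      rcases le_total x y with h | h
      · exact half x y hx h hmod
      · exact (half y x hy h hmod.symm).symm
    -- pigeonhole for powers of p mod d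
    obtain ⟨i, j, hij, hpij⟩ : ∃ i j : ℕ, i < j ∧ p ^ i % d = p ^ j % d := by
      obtain ⟨i, _, j, _, hne, heq⟩ :=
        Finset.exists_ne_map_eq_of_card_lt_of_maps_to
          (s := Finset.range (d + 1)) (t := Finset.range d)
          (by simpa using Nat.lt_succ_self d)
          (f := fun m => p ^ m % d)
          (fun m _ => Finset.mem_range.mpr (Nat.mod_lt _ hd))
      rcases hne.lt_or_gt with h | h
      · exact ⟨i, j, h, heq⟩
      · exact ⟨j, i, h, heq.symm⟩
    set e := j - i with he_def
    have he : 0 < e := by omega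
    have step : ∀ x : ℕ, i ≤ x → p ^ (x + e) % d = p ^ x % d := by
      intro x hx
      have h1 : p ^ (x + e) = p ^ (x - i) * p ^ j := by
        rw [← pow_add]; congr 1; omega
      have h2 : p ^ x = p ^ (x - i) * p ^ i := by
        rw [← pow_add]; congr 1; omega
      rw [h1, h2]
      exact Nat.ModEq.mul_left _ (hpij.symm : Nat.ModEq d (p ^ j) (p ^ i))
    have aux2 : ∀ t x : ℕ, i ≤ x → p ^ (x + t * e) % d = p ^ x % d := by
      intro t
      induction t with
      | zero => simp
      | succ t ih =>
        intro x hx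
        rw [show x + (t + 1) * e = (x + t * e) + e by ring,
          step _ (by omega), ih x hx]
    have CL : ∀ a b : ℕ, i ≤ a → a ≤ b → a % e = b % e → p ^ a % d = p ^ b % d := by
      intro a b ha hab hmod
      obtain ⟨t, ht⟩ := (Nat.modEq_iff_dvd' hab).mp hmod
      have hb : b = a + (b - a) := by omega
      rw [hb, ht, show a + e * t = a + t * e by ring, aux2 t a ha]
    set B := max i n₀ with hB_def
    have hBn0 : n₀ ≤ p ^ B := by
      have h1 : B < 2 ^ B := Nat.lt_two_pow_self (n := B)
      have h2 : 2 ^ B ≤ p ^ B := Nat.pow_le_pow_left hp.two_le B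
      omega
    have hred : ∀ m : ℕ, B ≤ m → p ^ (B + (m - B) % e) % d = p ^ m % d := by
      intro m hm
      apply CL
      · omega
      · have := Nat.mod_le (m - B) e; omega
      · conv_rhs => rw [show m = B + (m - B) by omega]
        exact Nat.ModEq.add_left B (Nat.mod_modEq (m - B) e)
    -- the key reduction
    have key : ∀ m s : ℕ, ∃ m' s', m' < B + e ∧ s' < n₀ + d ∧
        (fun n => f₂ (p ^ m * n + s)) = (fun n => f₂ (p ^ m' * n + s')) := by
      intro m s
      by_cases hs : s < n₀
      · by_cases hm : m < B
        · exact ⟨m, s, by omega, by omega, rfl⟩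
        · refine ⟨B + (m - B) % e, s, ?_, by omega, ?_⟩
          · have := Nat.mod_lt (m - B) he; omega
          · funext n
            rcases Nat.eq_zero_or_pos n with rfl | hn
            · simp
            · have hle : ∀ m'' : ℕ, B ≤ m'' → n₀ ≤ p ^ m'' * n + s := by
                intro m'' hm''
                have h1 : p ^ B ≤ p ^ m'' := Nat.pow_le_pow_right hp.pos hm''
                have h2 : p ^ m'' ≤ p ^ m'' * n := Nat.le_mul_of_pos_right _ hn
                omega
              apply per2 _ _ (hle m (by omega)) (hle _ (by omega))
              exact Nat.ModEq.add_right s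
                (Nat.ModEq.mul_right n ((hred m (by omega)).symm : Nat.ModEq d (p ^ m) _))
      · have hs' : n₀ + (s - n₀) % d < n₀ + d := by
          have := Nat.mod_lt (s - n₀) hd; omega
        have hscong : Nat.ModEq d s (n₀ + (s - n₀) % d) := by
          conv_lhs => rw [show s = n₀ + (s - n₀) by omega]
          exact (Nat.ModEq.add_left n₀ (Nat.mod_modEq (s - n₀) d)).symm
        by_cases hm : m < B
        · refine ⟨m, n₀ + (s - n₀) % d, by omega, hs', ?_⟩
          funext n
          exact per2 _ _ (by omega) (by omega)
            (Nat.ModEq.add (Nat.ModEq.refl _) hscong)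
        · refine ⟨B + (m - B) % e, n₀ + (s - n₀) % d, ?_, hs', ?_⟩
          · have := Nat.mod_lt (m - B) he; omega
          · funext n
            exact per2 _ _ (by omega) (by omega)
              (Nat.ModEq.add
                (Nat.ModEq.mul_right n ((hred m (by omega)).symm : Nat.ModEq d (p ^ m) _))
                hscong)
    -- finite superset
    apply Set.Finite.subset
      (Set.Finite.insert a₂
        (Set.Finite.image (fun q : ℕ × ℕ => fun n => f₂ (p ^ q.1 * n + q.2))
          ((Set.finite_Iio (B + e)).prod (Set.finite_Iio (n₀ + d)))))
    rintro g ⟨k, r, hr, rfl⟩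
    rcases Nat.eq_zero_or_pos r with rfl | hrpos
    · left
      funext n
      rcases Nat.eq_zero_or_pos n with rfl | hn
      · simp
      · obtain ⟨t, ht, hnd, hdn⟩ := decomp n hn
        have h1 : p ^ k * n + 0 = p ^ (k + padicValNat p n) * t := by
          conv_lhs => rw [hdn]
          rw [pow_add]; ring
        rw [h1, valA _ _ ht hnd]
        conv_rhs => rw [show n = p ^ padicValNat p n * t from hdn]
        rw [valA _ _ ht hnd]
    · right
      obtain ⟨s, hspos, hsnd, hds⟩ := decomp r hrpos
      set jr := padicValNat p r with hjr
      have hjk : jr < k := by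
        have h1 : p ^ jr ≤ r := Nat.le_of_dvd hrpos pow_padicValNat_dvd
        have h2 : p ^ jr < p ^ k := lt_of_le_of_lt h1 hr
        exact (Nat.pow_lt_pow_iff_right hp.one_lt).mp h2
      set m := k - jr with hm_def
      have hm1 : 1 ≤ m := by omega
      have hgv : (fun n => a₂ (p ^ k * n + r)) = fun n => f₂ (p ^ m * n + s) := by
        funext n
        have h1 : p ^ k * n + r = p ^ jr * (p ^ m * n + s) := by
          rw [hds, show k = jr + m by omega, pow_add]; ring
        have h2 : ¬ p ∣ (p ^ m * n + s) := by
          intro h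
          have h3 : p ∣ p ^ m * n :=
            Dvd.dvd.mul_right (dvd_pow_self p (by omega)) n
          exact hsnd ((Nat.dvd_add_right h3).mp h)
        rw [h1, valA _ _ (by omega) h2]
      obtain ⟨m', s', hm', hs', heq⟩ := key m s
      rw [hgv, heq]
      exact ⟨(m', s'), ⟨Set.mem_Iio.mpr hm', Set.mem_Iio.mpr hs'⟩, rfl⟩
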